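/- Let m₂ = m₃ = m > 0, m₁ > 0 and μ₁ > μ₂ > 0, and let q₁, q₄ > 0 satisfy the isosceles equilibrium equations m²/q₁² + 4mm₁q₁/(q₁²+4q₄²)^{3/2} − μ₂²/(ν₁q₁³) = 0 and 16mm₁q₄/(q₁²+4q₄²)^{3/2} − μ₁²/(ν₂q₄³) = 0. Then the 2×2 matrix ∂²H/∂(q₁,q₄)² of second partial derivatives of the fully reduced Hamiltonian H with respect to (q₁,q₄), evaluated at the point with positions (q₁,0,0,q₄) and zero momenta, is positive definite; equivalently, both of its eigenvalues are positive. -/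

import Mathlib

noncomputable section

/-- `f(q_i, q_j, L₃) = ((L_d + L_s)²q_i² + (L_d − L_s)²q_j²)/(16A²)`,
with `L_d = √(Δ² − L₃²)`, `L_s = √(Σ² − L₃²)`, `Δ = μ₁ − μ₂`, `Σ = μ₁ + μ₂`. -/
def fred (μ₁ μ₂ A qi qj L₃ : ℝ) : ℝ :=
  let Ld := Real.sqrt ((μ₁ - μ₂) ^ 2 - L₃ ^ 2)
  let Ls := Real.sqrt ((μ₁ + μ₂) ^ 2 - L₃ ^ 2)
  ((Ld + Ls) ^ 2 * qi ^ 2 + (Ld - Ls) ^ 2 * qj ^ 2) / (16 * A ^ 2)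

/-- The fully reduced Hamiltonian of the three-body problem in `ℝ⁴` on the phase space
`ℝ⁴ × ℝ⁴` (positions `q`, momenta `p`). -/
def Hred (ν₁ ν₂ μ₁ μ₂ : ℝ) (V : (Fin 3 → ℝ) → ℝ) (z : (Fin 4 → ℝ) × (Fin 4 → ℝ)) : ℝ :=
  let q := z.1; let p := z.2
  let A := (q 0 * q 3 - q 1 * q 2) / 2
  let L₃ := q 0 * p 1 - q 1 * p 0 + q 2 * p 3 - q 3 * p 2
  (1 / (2 * ν₁)) * (p 0 ^ 2 + p 1 ^ 2 + fred μ₁ μ₂ A (q 2) (q 3) L₃) +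
    (1 / (2 * ν₂)) * (p 2 ^ 2 + p 3 ^ 2 + fred μ₁ μ₂ A (q 0) (q 1) L₃) +
    V ![q 0 ^ 2 + q 1 ^ 2, q 2 ^ 2 + q 3 ^ 2, q 0 * q 2 + q 1 * q 3]

/-- The Newtonian potential of the three-body problem in the translation-reduced
variables: `V(s₁,s₂,s₃) = −m₂m₃/√s₁ − m₃m₁/√(a₂²s₁+s₂+2a₂s₃) − m₁m₂/√(a₃²s₁+s₂−2a₃s₃)`
with `a₂ = m₂/(m₂+m₃)`, `a₃ = m₃/(m₂+m₃)`. -/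
def Vnewt (m₁ m₂ m₃ : ℝ) (s : Fin 3 → ℝ) : ℝ :=
  -(m₂ * m₃ / Real.sqrt (s 0)) -
    m₃ * m₁ / Real.sqrt ((m₂ / (m₂ + m₃)) ^ 2 * s 0 + s 1 + 2 * (m₂ / (m₂ + m₃)) * s 2) -
    m₁ * m₂ / Real.sqrt ((m₃ / (m₂ + m₃)) ^ 2 * s 0 + s 1 - 2 * (m₃ / (m₂ + m₃)) * s 2)

/-- Phase space of the fully reduced Hamiltonian. -/
abbrev PS := (Fin 4 → ℝ) × (Fin 4 → ℝ)

/-- Basis vector in the `q_i` direction. -/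
def eQ (i : Fin 4) : PS := (Pi.single i 1, 0)

/-- Second directional derivative (Hessian bilinear form). -/
def D2 (H : PS → ℝ) (z u v : PS) : ℝ :=
  fderiv ℝ (fun w => fderiv ℝ H w v) z u

/-! ### Auxiliary machinery -/

lemma line_hasDerivAt (w u : PS) (t : ℝ) : HasDerivAt (fun s : ℝ => w + s • u) u t := by
  simpa using ((hasDerivAt_id t).smul_const u).const_add w

/-- Reduction of the Hessian bilinear form to a second derivative along a 2-plane. -/
lemma D2_slice (H : PS → ℝ) (z u v : PS) (hH : ContDiffAt ℝ 2 H z) :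
    D2 H z u v = deriv (fun s : ℝ => deriv (fun t : ℝ => H (z + s • u + t • v)) 0) 0 := by
  obtain ⟨U, hU, hHU⟩ := hH.contDiffOn (le_refl 2) (by simp)
  set U' := interior U with hU'
  have hU'open : IsOpen U' := isOpen_interior
  have hzU' : z ∈ U' := mem_interior_iff_mem_nhds.mpr hU
  have hHU' : ContDiffOn ℝ 2 H U' := hHU.mono interior_subset
  have hdiff : ∀ w ∈ U', DifferentiableAt ℝ H w := fun w hw =>
    (hHU'.differentiableOn (by norm_num)).differentiableAt (hU'open.mem_nhds hw)
  have hinner : ∀ w ∈ U', deriv (fun t : ℝ => H (w + t • v)) 0 = fderiv ℝ H w v := by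
    intro w hw
    have hfd : HasFDerivAt H (fderiv ℝ H w) (w + (0:ℝ) • v) := by
      simpa using (hdiff w hw).hasFDerivAt
    have h1 := hfd.comp_hasDerivAt 0 (line_hasDerivAt w v 0)
    exact (h1 : HasDerivAt (fun t : ℝ => H (w + t • v)) (fderiv ℝ H w v) 0).deriv
  set F : PS → ℝ := fun w => fderiv ℝ H w v with hF
  have hFd : DifferentiableAt ℝ F z := by
    have h2 : DifferentiableAt ℝ (fderiv ℝ H) z :=
      (hH.fderiv_right (m := 1) (by norm_num)).differentiableAt (by norm_num)
    exact h2.clm_apply (differentiableAt_const v)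
  have hout : HasDerivAt (fun s : ℝ => F (z + s • u)) (fderiv ℝ F z u) 0 := by
    have hfd : HasFDerivAt F (fderiv ℝ F z) (z + (0:ℝ) • u) := by
      simpa using hFd.hasFDerivAt
    exact hfd.comp_hasDerivAt 0 (line_hasDerivAt z u 0)
  have hev : (fun s : ℝ => deriv (fun t : ℝ => H (z + s • u + t • v)) 0)
      =ᶠ[nhds 0] fun s : ℝ => F (z + s • u) := by
    have hcont : ContinuousAt (fun s : ℝ => z + s • u) 0 := by fun_prop
    have hmem : ∀ᶠ s : ℝ in nhds 0, z + s • u ∈ U' := by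
      have := hcont.preimage_mem_nhds (hU'open.mem_nhds (by simpa using hzU'))
      exact this
    filter_upwards [hmem] with s hs
    exact hinner _ hs
  rw [D2, ← hout.deriv]
  exact hev.deriv_eq.symm

lemma pt_eq (q₁ q₄ a b : ℝ) : ((![q₁,0,0,q₄], 0) : PS) + a • eQ 0 + b • eQ 3
    = ((![q₁+a,0,0,q₄+b], 0) : PS) := by
  refine Prod.ext ?_ ?_ <;> funext i <;> fin_cases i <;>
    simp [eQ, Matrix.vecHead, Matrix.vecTail, Function.comp, Pi.single_apply,
      show (Fin.succ 2 : Fin 4) = 3 from rfl]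

lemma pt_eq00 (q₁ q₄ a b : ℝ) : ((![q₁,0,0,q₄], 0) : PS) + a • eQ 0 + b • eQ 0
    = ((![q₁+a+b,0,0,q₄], 0) : PS) := by
  refine Prod.ext ?_ ?_ <;> funext i <;> fin_cases i <;>
    simp [eQ, Matrix.vecHead, Matrix.vecTail, Function.comp, Pi.single_apply,
      show (Fin.succ 2 : Fin 4) = 3 from rfl]

lemma pt_eq30 (q₁ q₄ a b : ℝ) : ((![q₁,0,0,q₄], 0) : PS) + a • eQ 3 + b • eQ 0
    = ((![q₁+b,0,0,q₄+a], 0) : PS) := by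
  refine Prod.ext ?_ ?_ <;> funext i <;> fin_cases i <;>
    simp [eQ, Matrix.vecHead, Matrix.vecTail, Function.comp, Pi.single_apply,
      show (Fin.succ 2 : Fin 4) = 3 from rfl]

lemma pt_eq33 (q₁ q₄ a b : ℝ) : ((![q₁,0,0,q₄], 0) : PS) + a • eQ 3 + b • eQ 3
    = ((![q₁,0,0,q₄+a+b], 0) : PS) := by
  refine Prod.ext ?_ ?_ <;> funext i <;> fin_cases i <;>
    simp [eQ, Matrix.vecHead, Matrix.vecTail, Function.comp, Pi.single_apply,
      show (Fin.succ 2 : Fin 4) = 3 from rfl]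

/-! ### The restricted potential and its derivatives -/

def phi (m m₁ μ₁ μ₂ x y : ℝ) : ℝ :=
  μ₂^2/(m*x^2) + (2*m+m₁)*μ₁^2/(4*m*m₁*y^2) - m^2/x - 2*m*m₁/Real.sqrt (x^2/4+y^2)
def phiX (m m₁ μ₁ μ₂ x y : ℝ) : ℝ :=
  -2*μ₂^2/(m*x^3) + m^2/x^2 + (m*m₁*x/2)/(Real.sqrt (x^2/4+y^2))^3
def phiY (m m₁ μ₁ μ₂ x y : ℝ) : ℝ :=
  -(2*m+m₁)*μ₁^2/(2*m*m₁*y^3) + 2*m*m₁*y/(Real.sqrt (x^2/4+y^2))^3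
def phiXX (m m₁ μ₁ μ₂ x y : ℝ) : ℝ :=
  6*μ₂^2/(m*x^4) - 2*m^2/x^3 + (m*m₁/2)/(Real.sqrt (x^2/4+y^2))^3
    - (3*m*m₁*x^2/8)/(Real.sqrt (x^2/4+y^2))^5
def phiXY (m m₁ x y : ℝ) : ℝ := -(3*m*m₁*x*y/2)/(Real.sqrt (x^2/4+y^2))^5
def phiYY (m m₁ μ₁ μ₂ x y : ℝ) : ℝ :=
  3*(2*m+m₁)*μ₁^2/(2*m*m₁*y^4) + 2*m*m₁/(Real.sqrt (x^2/4+y^2))^3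
    - 6*m*m₁*y^2/(Real.sqrt (x^2/4+y^2))^5

lemma slice_val (m m₁ μ₁ μ₂ : ℝ) (hm : 0 < m) (hm₁ : 0 < m₁) (hμ : μ₂ ≤ μ₁)
    (hμ₂ : 0 ≤ μ₂) {x y : ℝ} (hx : 0 < x) (hy : 0 < y) :
    Hred (m/2) (2*m*m₁/(2*m+m₁)) μ₁ μ₂ (Vnewt m₁ m m) ((![x,0,0,y], 0)) =
    phi m m₁ μ₁ μ₂ x y := by
  have hW : (0:ℝ) < x^2/4 + y^2 := by positivity
  have hsW : (0:ℝ) < Real.sqrt (x^2/4+y^2) := Real.sqrt_pos.mpr hW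
  have hmm : m/(m+m) = 1/2 := by field_simp; ring
  simp only [Hred, fred, Vnewt, phi]
  norm_num [hmm, Matrix.cons_val_zero, Matrix.cons_val_one, Matrix.cons_val_two, Matrix.cons_val_three, Matrix.head_cons, Matrix.tail_cons]
  rw [Real.sqrt_sq (by linarith), Real.sqrt_sq hx.le, Real.sqrt_sq (by linarith : 0 ≤ μ₁+μ₂)]
  rw [show (1/4:ℝ) * x^2 + y^2 = x^2/4 + y^2 by ring]
  have h2m : (0:ℝ) < 2*m+m₁ := by linarith
  field_simp
  ring

lemma hsqX {x y : ℝ} (hx : x ≠ 0) : HasDerivAt (fun x : ℝ => Real.sqrt (x^2/4+y^2))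
    ((x/2) / (2 * Real.sqrt (x^2/4+y^2))) x := by
  have h1 : HasDerivAt (fun x : ℝ => x^2/4 + y^2) (x/2) x := by
    have := ((hasDerivAt_pow 2 x).div_const 4).add_const (y^2)
    refine this.congr_deriv ?_; norm_num; ring
  exact h1.sqrt (by positivity)

lemma hsqY {x y : ℝ} (hy : y ≠ 0) : HasDerivAt (fun y : ℝ => Real.sqrt (x^2/4+y^2))
    (y / Real.sqrt (x^2/4+y^2)) y := by
  have h1 : HasDerivAt (fun y : ℝ => x^2/4 + y^2) (2*y) y := by
    have := (hasDerivAt_pow 2 y).const_add (x^2/4)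
    refine this.congr_deriv ?_; norm_num
  have hs : (0:ℝ) < Real.sqrt (x^2/4+y^2) := Real.sqrt_pos.mpr (by positivity)
  have := h1.sqrt (by positivity : x^2/4 + y^2 ≠ 0)
  refine this.congr_deriv ?_
  field_simp

lemma d_phi_x (m m₁ μ₁ μ₂ : ℝ) {x y : ℝ} (hm : 0 < m) (hx : 0 < x) (hy : 0 < y) :
    HasDerivAt (fun x => phi m m₁ μ₁ μ₂ x y) (phiX m m₁ μ₁ μ₂ x y) x := by
  have hs : (0:ℝ) < Real.sqrt (x^2/4+y^2) := Real.sqrt_pos.mpr (by positivity)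
  have h1 : HasDerivAt (fun x : ℝ => μ₂^2/(m*x^2)) (-2*μ₂^2/(m*x^3)) x := by
    have := (hasDerivAt_const x (μ₂^2)).div ((hasDerivAt_pow 2 x).const_mul m)
      (by positivity : m * x^2 ≠ 0)
    refine this.congr_deriv ?_
    set sq := Real.sqrt (x^2/4+y^2) with hsdef
    push_cast
    field_simp
    ring
  have h2 : HasDerivAt (fun x : ℝ => m^2/x) (-(m^2/x^2)) x := by
    have := (hasDerivAt_const x (m^2)).div (hasDerivAt_id x) hx.ne'
    refine this.congr_deriv ?_; simp only [id]; field_simp; ring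
  have h3 : HasDerivAt (fun x : ℝ => 2*m*m₁/Real.sqrt (x^2/4+y^2))
      (-((m*m₁*x/2)/(Real.sqrt (x^2/4+y^2))^3)) x := by
    have := (hasDerivAt_const x (2*m*m₁)).div (hsqX hx.ne') hs.ne'
    refine this.congr_deriv ?_
    set sq := Real.sqrt (x^2/4+y^2) with hsdef
    push_cast
    field_simp
    ring
  have H := ((h1.add_const ((2*m+m₁)*μ₁^2/(4*m*m₁*y^2))).sub h2).sub h3
  have hval : phiX m m₁ μ₁ μ₂ x y = -2*μ₂^2/(m*x^3) - -(m^2/x^2)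
      - -((m*m₁*x/2)/(Real.sqrt (x^2/4+y^2))^3) := by
    simp only [phiX]; ring
  rw [hval]; exact H

lemma d_phi_y (m m₁ μ₁ μ₂ : ℝ) {x y : ℝ} (hm : 0 < m) (hm₁ : 0 < m₁) (hy : 0 < y) :
    HasDerivAt (fun y => phi m m₁ μ₁ μ₂ x y) (phiY m m₁ μ₁ μ₂ x y) y := by
  have hs : (0:ℝ) < Real.sqrt (x^2/4+y^2) := Real.sqrt_pos.mpr (by positivity)
  have h2 : HasDerivAt (fun y : ℝ => (2*m+m₁)*μ₁^2/(4*m*m₁*y^2))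
      (-(2*m+m₁)*μ₁^2/(2*m*m₁*y^3)) y := by
    have := (hasDerivAt_const y ((2*m+m₁)*μ₁^2)).div
      ((hasDerivAt_pow 2 y).const_mul (4*m*m₁)) (by positivity : 4*m*m₁ * y^2 ≠ 0)
    refine this.congr_deriv ?_
    set sq := Real.sqrt (x^2/4+y^2) with hsdef
    push_cast
    field_simp
    ring
  have h4 : HasDerivAt (fun y : ℝ => 2*m*m₁/Real.sqrt (x^2/4+y^2))
      (-(2*m*m₁*y/(Real.sqrt (x^2/4+y^2))^3)) y := by
    have := (hasDerivAt_const y (2*m*m₁)).div (hsqY hy.ne') hs.ne'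
    refine this.congr_deriv ?_
    set sq := Real.sqrt (x^2/4+y^2) with hsdef
    push_cast
    field_simp
    ring
  have H := (((h2.const_add (μ₂^2/(m*x^2))).sub_const (m^2/x)).sub h4)
  have hval : phiY m m₁ μ₁ μ₂ x y = -(2*m+m₁)*μ₁^2/(2*m*m₁*y^3)
      - -(2*m*m₁*y/(Real.sqrt (x^2/4+y^2))^3) := by
    simp only [phiY]; ring
  rw [hval]; exact H

lemma d_phiX_x (m m₁ μ₁ μ₂ : ℝ) {x y : ℝ} (hm : 0 < m) (hx : 0 < x) (hy : 0 < y) :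
    HasDerivAt (fun x => phiX m m₁ μ₁ μ₂ x y) (phiXX m m₁ μ₁ μ₂ x y) x := by
  have hs : (0:ℝ) < Real.sqrt (x^2/4+y^2) := Real.sqrt_pos.mpr (by positivity)
  have h1 : HasDerivAt (fun x : ℝ => -2*μ₂^2/(m*x^3)) (6*μ₂^2/(m*x^4)) x := by
    have := (hasDerivAt_const x (-2*μ₂^2)).div ((hasDerivAt_pow 3 x).const_mul m)
      (by positivity : m * x^3 ≠ 0)
    refine this.congr_deriv ?_
    set sq := Real.sqrt (x^2/4+y^2) with hsdef
    push_cast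
    field_simp
    ring
  have h2 : HasDerivAt (fun x : ℝ => m^2/x^2) (-(2*m^2/x^3)) x := by
    have := (hasDerivAt_const x (m^2)).div (hasDerivAt_pow 2 x) (by positivity : x^2 ≠ 0)
    refine this.congr_deriv ?_
    set sq := Real.sqrt (x^2/4+y^2) with hsdef
    push_cast
    field_simp
    ring
  have h3 : HasDerivAt (fun x : ℝ => (m*m₁*x/2)/(Real.sqrt (x^2/4+y^2))^3)
      ((m*m₁/2)/(Real.sqrt (x^2/4+y^2))^3
        - (3*m*m₁*x^2/8)/(Real.sqrt (x^2/4+y^2))^5) x := by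
    have hnum : HasDerivAt (fun x : ℝ => m*m₁*x/2) (m*m₁/2) x := by
      have := ((hasDerivAt_id x).const_mul (m*m₁)).div_const 2
      refine this.congr_deriv ?_; ring
    have hden := (hsqX (y := y) hx.ne').pow 3
    have := hnum.div hden (pow_ne_zero 3 hs.ne')
    refine this.congr_deriv ?_
    simp only [Pi.pow_apply]
    set sq := Real.sqrt (x^2/4+y^2) with hsdef
    push_cast
    field_simp
    ring
  have H := (h1.add h2).add h3
  have hval : phiXX m m₁ μ₁ μ₂ x y = 6*μ₂^2/(m*x^4) + (-(2*m^2/x^3))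
      + ((m*m₁/2)/(Real.sqrt (x^2/4+y^2))^3
        - (3*m*m₁*x^2/8)/(Real.sqrt (x^2/4+y^2))^5) := by
    simp only [phiXX]; ring
  rw [hval]; exact H

lemma d_phiY_x (m m₁ μ₁ μ₂ : ℝ) {x y : ℝ} (hm : 0 < m) (hm₁ : 0 < m₁)
    (hx : 0 < x) (hy : 0 < y) :
    HasDerivAt (fun x => phiY m m₁ μ₁ μ₂ x y) (phiXY m m₁ x y) x := by
  have hs : (0:ℝ) < Real.sqrt (x^2/4+y^2) := Real.sqrt_pos.mpr (by positivity)
  have h3 : HasDerivAt (fun x : ℝ => 2*m*m₁*y/(Real.sqrt (x^2/4+y^2))^3)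
      (-(3*m*m₁*x*y/2)/(Real.sqrt (x^2/4+y^2))^5) x := by
    have hden := (hsqX (y := y) hx.ne').pow 3
    have := (hasDerivAt_const x (2*m*m₁*y)).div hden (pow_ne_zero 3 hs.ne')
    refine this.congr_deriv ?_
    simp only [Pi.pow_apply]
    set sq := Real.sqrt (x^2/4+y^2) with hsdef
    push_cast
    field_simp
    ring
  have H := h3.const_add (-(2*m+m₁)*μ₁^2/(2*m*m₁*y^3))
  have hval : phiXY m m₁ x y = -(3*m*m₁*x*y/2)/(Real.sqrt (x^2/4+y^2))^5 := by
    simp only [phiXY]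
  rw [hval]; exact H

lemma d_phiX_y (m m₁ μ₁ μ₂ : ℝ) {x y : ℝ} (hm : 0 < m) (hm₁ : 0 < m₁)
    (hx : 0 < x) (hy : 0 < y) :
    HasDerivAt (fun y => phiX m m₁ μ₁ μ₂ x y) (phiXY m m₁ x y) y := by
  have hs : (0:ℝ) < Real.sqrt (x^2/4+y^2) := Real.sqrt_pos.mpr (by positivity)
  have h3 : HasDerivAt (fun y : ℝ => (m*m₁*x/2)/(Real.sqrt (x^2/4+y^2))^3)
      (-(3*m*m₁*x*y/2)/(Real.sqrt (x^2/4+y^2))^5) y := by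
    have hden := (hsqY (x := x) hy.ne').pow 3
    have := (hasDerivAt_const y (m*m₁*x/2)).div hden (pow_ne_zero 3 hs.ne')
    refine this.congr_deriv ?_
    simp only [Pi.pow_apply]
    set sq := Real.sqrt (x^2/4+y^2) with hsdef
    push_cast
    field_simp
    ring
  have H := h3.const_add (-2*μ₂^2/(m*x^3) + m^2/x^2)
  have hval : phiXY m m₁ x y = -(3*m*m₁*x*y/2)/(Real.sqrt (x^2/4+y^2))^5 := by
    simp only [phiXY]
  rw [hval]; exact H

lemma d_phiY_y (m m₁ μ₁ μ₂ : ℝ) {x y : ℝ} (hm : 0 < m) (hm₁ : 0 < m₁)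
    (hx : 0 < x) (hy : 0 < y) :
    HasDerivAt (fun y => phiY m m₁ μ₁ μ₂ x y) (phiYY m m₁ μ₁ μ₂ x y) y := by
  have hs : (0:ℝ) < Real.sqrt (x^2/4+y^2) := Real.sqrt_pos.mpr (by positivity)
  have h1 : HasDerivAt (fun y : ℝ => -(2*m+m₁)*μ₁^2/(2*m*m₁*y^3))
      (3*(2*m+m₁)*μ₁^2/(2*m*m₁*y^4)) y := by
    have := (hasDerivAt_const y (-(2*m+m₁)*μ₁^2)).div
      ((hasDerivAt_pow 3 y).const_mul (2*m*m₁)) (by positivity : 2*m*m₁*y^3 ≠ 0)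
    refine this.congr_deriv ?_
    set sq := Real.sqrt (x^2/4+y^2) with hsdef
    push_cast
    field_simp
    ring
  have h2 : HasDerivAt (fun y : ℝ => 2*m*m₁*y/(Real.sqrt (x^2/4+y^2))^3)
      (2*m*m₁/(Real.sqrt (x^2/4+y^2))^3 - 6*m*m₁*y^2/(Real.sqrt (x^2/4+y^2))^5) y := by
    have hnum : HasDerivAt (fun y : ℝ => 2*m*m₁*y) (2*m*m₁) y := by
      have := (hasDerivAt_id y).const_mul (2*m*m₁)
      refine this.congr_deriv ?_; ring
    have hden := (hsqY (x := x) hy.ne').pow 3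
    have := hnum.div hden (pow_ne_zero 3 hs.ne')
    refine this.congr_deriv ?_
    simp only [Pi.pow_apply]
    set sq := Real.sqrt (x^2/4+y^2) with hsdef
    push_cast
    field_simp
    ring
  have H := h1.add h2
  have hval : phiYY m m₁ μ₁ μ₂ x y = 3*(2*m+m₁)*μ₁^2/(2*m*m₁*y^4)
      + (2*m*m₁/(Real.sqrt (x^2/4+y^2))^3 - 6*m*m₁*y^2/(Real.sqrt (x^2/4+y^2))^5) := by
    simp only [phiYY]; ring
  rw [hval]; exact H

lemma contDiffAt_Hred (m m₁ μ₁ μ₂ ν₁ ν₂ q₁ q₄ : ℝ) (hm : 0 < m) (hm₁ : 0 < m₁)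
    (hμ : μ₂ < μ₁) (hμ₂ : 0 < μ₂) (hq₁ : 0 < q₁) (hq₄ : 0 < q₄) :
    ContDiffAt ℝ 2 (Hred ν₁ ν₂ μ₁ μ₂ (Vnewt m₁ m m)) ((![q₁,0,0,q₄], 0) : PS) := by
  set zs : PS := ((![q₁,0,0,q₄], 0) : PS) with hzs
  have hq : ∀ i, ContDiff ℝ 2 (fun z : PS => z.1 i) :=
    fun i => (contDiff_apply ℝ ℝ i).comp contDiff_fst
  have hp : ∀ i, ContDiff ℝ 2 (fun z : PS => z.2 i) :=
    fun i => (contDiff_apply ℝ ℝ i).comp contDiff_snd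
  -- values at zs
  have hv0 : (zs.1 0 : ℝ) = q₁ := rfl
  have hv3 : (zs.1 3 : ℝ) = q₄ := rfl
  have hL : ContDiff ℝ 2 (fun z : PS => z.1 0 * z.2 1 - z.1 1 * z.2 0
      + z.1 2 * z.2 3 - z.1 3 * z.2 2) :=
    ((((hq 0).mul (hp 1)).sub ((hq 1).mul (hp 0))).add ((hq 2).mul (hp 3))).sub
      ((hq 3).mul (hp 2))
  have hLzs : (fun z : PS => z.1 0 * z.2 1 - z.1 1 * z.2 0
      + z.1 2 * z.2 3 - z.1 3 * z.2 2) zs = 0 := by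
    show q₁ * 0 - 0 * 0 + 0 * 0 - q₄ * 0 = 0; ring
  have hA : ContDiff ℝ 2 (fun z : PS => (z.1 0 * z.1 3 - z.1 1 * z.1 2) / 2) :=
    (((hq 0).mul (hq 3)).sub ((hq 1).mul (hq 2))).div_const 2
  have hAzs : (fun z : PS => (z.1 0 * z.1 3 - z.1 1 * z.1 2) / 2) zs = q₁ * q₄ / 2 := by
    show (q₁ * q₄ - 0 * 0) / 2 = q₁ * q₄ / 2; ring
  have hLd : ContDiffAt ℝ 2 (fun z : PS => Real.sqrt ((μ₁ - μ₂)^2 -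
      (z.1 0 * z.2 1 - z.1 1 * z.2 0 + z.1 2 * z.2 3 - z.1 3 * z.2 2)^2)) zs := by
    refine (Real.contDiffAt_sqrt ?_).comp zs ((contDiff_const.sub (hL.pow 2)).contDiffAt)
    show (μ₁ - μ₂)^2 - (q₁*(0:ℝ) - 0*0 + 0*0 - q₄*0)^2 ≠ 0
    rw [show (μ₁ - μ₂)^2 - (q₁*(0:ℝ) - 0*0 + 0*0 - q₄*0)^2 = (μ₁ - μ₂)^2 by ring]
    have h0 : (0:ℝ) < μ₁ - μ₂ := by linarith
    positivity
  have hLs : ContDiffAt ℝ 2 (fun z : PS => Real.sqrt ((μ₁ + μ₂)^2 -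
      (z.1 0 * z.2 1 - z.1 1 * z.2 0 + z.1 2 * z.2 3 - z.1 3 * z.2 2)^2)) zs := by
    refine (Real.contDiffAt_sqrt ?_).comp zs ((contDiff_const.sub (hL.pow 2)).contDiffAt)
    show (μ₁ + μ₂)^2 - (q₁*(0:ℝ) - 0*0 + 0*0 - q₄*0)^2 ≠ 0
    rw [show (μ₁ + μ₂)^2 - (q₁*(0:ℝ) - 0*0 + 0*0 - q₄*0)^2 = (μ₁ + μ₂)^2 by ring]
    have h0 : (0:ℝ) < μ₁ + μ₂ := by linarith
    positivity
  have hden : ContDiffAt ℝ 2 (fun z : PS =>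
      16 * ((z.1 0 * z.1 3 - z.1 1 * z.1 2) / 2)^2) zs := (contDiff_const.mul (hA.pow 2)).contDiffAt
  have hdenzs : (fun z : PS => 16 * ((z.1 0 * z.1 3 - z.1 1 * z.1 2) / 2)^2) zs ≠ 0 := by
    show 16 * ((q₁ * q₄ - 0 * 0) / 2)^2 ≠ 0
    rw [show ((q₁ * q₄ - 0 * 0) / 2 : ℝ) = q₁ * q₄ / 2 by ring]; positivity
  have hfred : ∀ i j : Fin 4, ContDiffAt ℝ 2 (fun z : PS =>
      fred μ₁ μ₂ ((z.1 0 * z.1 3 - z.1 1 * z.1 2) / 2) (z.1 i) (z.1 j)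
        (z.1 0 * z.2 1 - z.1 1 * z.2 0 + z.1 2 * z.2 3 - z.1 3 * z.2 2)) zs := by
    intro i j
    refine ContDiffAt.div ?_ hden hdenzs
    exact (((hLd.add hLs).pow 2).mul ((hq i).pow 2).contDiffAt).add
      (((hLd.sub hLs).pow 2).mul ((hq j).pow 2).contDiffAt)
  -- potential part
  have hs0 : ContDiff ℝ 2 (fun z : PS => z.1 0 ^ 2 + z.1 1 ^ 2) := ((hq 0).pow 2).add ((hq 1).pow 2)
  have hs1 : ContDiff ℝ 2 (fun z : PS => z.1 2 ^ 2 + z.1 3 ^ 2) := ((hq 2).pow 2).add ((hq 3).pow 2)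
  have hs2 : ContDiff ℝ 2 (fun z : PS => z.1 0 * z.1 2 + z.1 1 * z.1 3) :=
    ((hq 0).mul (hq 2)).add ((hq 1).mul (hq 3))
  have hsq1 : ContDiffAt ℝ 2 (fun z : PS => Real.sqrt (z.1 0 ^ 2 + z.1 1 ^ 2)) zs := by
    refine (Real.contDiffAt_sqrt ?_).comp zs hs0.contDiffAt
    show q₁ ^ 2 + (0:ℝ) ^ 2 ≠ 0; positivity
  have hsq1zs : Real.sqrt (zs.1 0 ^ 2 + zs.1 1 ^ 2) ≠ 0 := by
    show Real.sqrt (q₁ ^ 2 + (0:ℝ) ^ 2) ≠ 0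
    rw [Real.sqrt_ne_zero']; positivity
  have hrad : ∀ c : ℝ, 0 < (c^2 * (q₁^2 + 0^2) + (0^2 + q₄^2) + 2 * c * (q₁*0 + 0*q₄) : ℝ)
      ∨ True := fun c => Or.inr trivial
  have hsq2 : ContDiffAt ℝ 2 (fun z : PS => Real.sqrt ((m/(m+m))^2 * (z.1 0^2 + z.1 1^2)
      + (z.1 2^2 + z.1 3^2) + 2*(m/(m+m)) * (z.1 0 * z.1 2 + z.1 1 * z.1 3))) zs := by
    refine (Real.contDiffAt_sqrt ?_).comp zs
      (((contDiff_const.mul hs0).add hs1).add (contDiff_const.mul hs2)).contDiffAt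
    show (m/(m+m))^2 * (q₁^2 + 0^2) + (0^2 + q₄^2) + 2*(m/(m+m)) * (q₁*0 + 0*q₄) ≠ 0
    have hmm : m/(m+m) = 1/2 := by field_simp; ring
    rw [hmm]; positivity
  have hsq2zs : Real.sqrt ((m/(m+m))^2 * (zs.1 0^2 + zs.1 1^2)
      + (zs.1 2^2 + zs.1 3^2) + 2*(m/(m+m)) * (zs.1 0 * zs.1 2 + zs.1 1 * zs.1 3)) ≠ 0 := by
    show Real.sqrt ((m/(m+m))^2 * (q₁^2 + 0^2) + (0^2 + q₄^2)
      + 2*(m/(m+m)) * (q₁*0 + 0*q₄)) ≠ 0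
    have hmm : m/(m+m) = 1/2 := by field_simp; ring
    rw [hmm, Real.sqrt_ne_zero']; positivity
  have hsq3 : ContDiffAt ℝ 2 (fun z : PS => Real.sqrt ((m/(m+m))^2 * (z.1 0^2 + z.1 1^2)
      + (z.1 2^2 + z.1 3^2) - 2*(m/(m+m)) * (z.1 0 * z.1 2 + z.1 1 * z.1 3))) zs := by
    refine (Real.contDiffAt_sqrt ?_).comp zs
      (((contDiff_const.mul hs0).add hs1).sub (contDiff_const.mul hs2)).contDiffAt
    show (m/(m+m))^2 * (q₁^2 + 0^2) + (0^2 + q₄^2) - 2*(m/(m+m)) * (q₁*0 + 0*q₄) ≠ 0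
    rw [show ((m/(m+m))^2 * (q₁^2 + 0^2) + (0^2 + q₄^2) - 2*(m/(m+m)) * (q₁*0 + 0*q₄) : ℝ)
      = (m/(m+m))^2 * q₁^2 + q₄^2 by ring]; positivity
  have hsq3zs : Real.sqrt ((m/(m+m))^2 * (zs.1 0^2 + zs.1 1^2)
      + (zs.1 2^2 + zs.1 3^2) - 2*(m/(m+m)) * (zs.1 0 * zs.1 2 + zs.1 1 * zs.1 3)) ≠ 0 := by
    show Real.sqrt ((m/(m+m))^2 * (q₁^2 + 0^2) + (0^2 + q₄^2)
      - 2*(m/(m+m)) * (q₁*0 + 0*q₄)) ≠ 0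
    rw [show ((m/(m+m))^2 * (q₁^2 + 0^2) + (0^2 + q₄^2) - 2*(m/(m+m)) * (q₁*0 + 0*q₄) : ℝ)
      = (m/(m+m))^2 * q₁^2 + q₄^2 by ring, Real.sqrt_ne_zero']; positivity
  have hVpart : ContDiffAt ℝ 2 (fun z : PS =>
      -(m * m / Real.sqrt (z.1 0 ^ 2 + z.1 1 ^ 2)) -
      m * m₁ / Real.sqrt ((m/(m+m))^2 * (z.1 0^2 + z.1 1^2) + (z.1 2^2 + z.1 3^2)
        + 2*(m/(m+m)) * (z.1 0 * z.1 2 + z.1 1 * z.1 3)) -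
      m₁ * m / Real.sqrt ((m/(m+m))^2 * (z.1 0^2 + z.1 1^2) + (z.1 2^2 + z.1 3^2)
        - 2*(m/(m+m)) * (z.1 0 * z.1 2 + z.1 1 * z.1 3))) zs := by
    refine ContDiffAt.sub (ContDiffAt.sub (ContDiffAt.neg ?_) ?_) ?_
    · exact ContDiffAt.div contDiffAt_const hsq1 hsq1zs
    · exact ContDiffAt.div contDiffAt_const hsq2 hsq2zs
    · exact ContDiffAt.div contDiffAt_const hsq3 hsq3zs
  have hp02 : ContDiff ℝ 2 (fun z : PS => z.2 0 ^ 2 + z.2 1 ^ 2) := ((hp 0).pow 2).add ((hp 1).pow 2)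
  have hp23 : ContDiff ℝ 2 (fun z : PS => z.2 2 ^ 2 + z.2 3 ^ 2) := ((hp 2).pow 2).add ((hp 3).pow 2)
  have htot : ContDiffAt ℝ 2 (fun z : PS =>
      (1 / (2 * ν₁)) * (z.2 0 ^ 2 + z.2 1 ^ 2 +
        fred μ₁ μ₂ ((z.1 0 * z.1 3 - z.1 1 * z.1 2) / 2) (z.1 2) (z.1 3)
          (z.1 0 * z.2 1 - z.1 1 * z.2 0 + z.1 2 * z.2 3 - z.1 3 * z.2 2)) +
      (1 / (2 * ν₂)) * (z.2 2 ^ 2 + z.2 3 ^ 2 +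
        fred μ₁ μ₂ ((z.1 0 * z.1 3 - z.1 1 * z.1 2) / 2) (z.1 0) (z.1 1)
          (z.1 0 * z.2 1 - z.1 1 * z.2 0 + z.1 2 * z.2 3 - z.1 3 * z.2 2)) +
      (-(m * m / Real.sqrt (z.1 0 ^ 2 + z.1 1 ^ 2)) -
      m * m₁ / Real.sqrt ((m/(m+m))^2 * (z.1 0^2 + z.1 1^2) + (z.1 2^2 + z.1 3^2)
        + 2*(m/(m+m)) * (z.1 0 * z.1 2 + z.1 1 * z.1 3)) -
      m₁ * m / Real.sqrt ((m/(m+m))^2 * (z.1 0^2 + z.1 1^2) + (z.1 2^2 + z.1 3^2)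
        - 2*(m/(m+m)) * (z.1 0 * z.1 2 + z.1 1 * z.1 3)))) zs := by
    refine ContDiffAt.add (ContDiffAt.add ?_ ?_) hVpart
    · exact contDiffAt_const.mul (hp02.contDiffAt.add (hfred 2 3))
    · exact contDiffAt_const.mul (hp23.contDiffAt.add (hfred 0 1))
  exact htot

lemma shift_deriv {f : ℝ → ℝ} {f' c : ℝ} (h : HasDerivAt f f' c) :
    HasDerivAt (fun t : ℝ => f (c + t)) f' 0 := by
  have h2 : HasDerivAt (fun t : ℝ => c + t) 1 0 := by
    simpa using (hasDerivAt_id (0:ℝ)).const_add c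
  have hc : HasDerivAt f f' (c + 0) := by rwa [add_zero]
  have h3 := hc.comp 0 h2
  rw [mul_one] at h3
  exact h3


lemma posdef_2x2 {a b c : ℝ} (ha : 0 < a) (hdet : 0 < a*c - b^2) :
    (!![a, b; b, c]).PosDef := by
  refine Matrix.PosDef.of_dotProduct_mulVec_pos ?_ ?_
  · unfold Matrix.IsHermitian
    ext i j
    fin_cases i <;> fin_cases j <;> simp [Matrix.conjTranspose_apply]
  · intro v hv
    have hv01 : v 0 ≠ 0 ∨ v 1 ≠ 0 := by
      by_contra h
      push_neg at h
      exact hv (funext fun i => by fin_cases i <;> simp [h.1, h.2])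
    have hexp : dotProduct (star v) ((!![a, b; b, c]).mulVec v)
        = a * (v 0 * v 0) + 2 * b * (v 0 * v 1) + c * (v 1 * v 1) := by
      simp [dotProduct, Matrix.mulVec, Fin.sum_univ_two]
      ring
    rw [hexp]
    rcases eq_or_ne (v 1) 0 with hv1 | hv1
    · have hv0 : v 0 ≠ 0 := by tauto
      rw [hv1]
      have h1 := mul_self_pos.mpr hv0
      nlinarith
    · nlinarith [sq_nonneg (a * v 0 + b * v 1), mul_pos hdet (mul_self_pos.mpr hv1)]

/-- At an isosceles relative equilibrium the `(q₁,q₄)` block of the Hessian of the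
fully reduced Hamiltonian is positive definite (both eigenvalues positive). -/
theorem isosceles_q1q4_block_posdef (m m₁ μ₁ μ₂ q₁ q₄ : ℝ) (hm : 0 < m)
    (hm₁ : 0 < m₁) (hμ : μ₁ > μ₂) (hμ₂ : 0 < μ₂) (hq₁ : 0 < q₁) (hq₄ : 0 < q₄)
    (heq1 : m ^ 2 / q₁ ^ 2 + 4 * m * m₁ * q₁ / (q₁ ^ 2 + 4 * q₄ ^ 2) ^ ((3 : ℝ) / 2) -
      μ₂ ^ 2 / ((m / 2) * q₁ ^ 3) = 0)
    (heq2 : 16 * m * m₁ * q₄ / (q₁ ^ 2 + 4 * q₄ ^ 2) ^ ((3 : ℝ) / 2) -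
      μ₁ ^ 2 / ((2 * m * m₁ / (2 * m + m₁)) * q₄ ^ 3) = 0) :
    (let H := Hred (m / 2) (2 * m * m₁ / (2 * m + m₁)) μ₁ μ₂ (Vnewt m₁ m m)
     let zs : PS := (![q₁, 0, 0, q₄], 0)
     (!![D2 H zs (eQ 0) (eQ 0), D2 H zs (eQ 0) (eQ 3);
         D2 H zs (eQ 3) (eQ 0), D2 H zs (eQ 3) (eQ 3)]).PosDef) := by
  have hμ₁pos : (0:ℝ) < μ₁ := lt_trans hμ₂ hμ
  set Hf : PS → ℝ := Hred (m/2) (2*m*m₁/(2*m+m₁)) μ₁ μ₂ (Vnewt m₁ m m) with hHf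
  set zsv : PS := ((![q₁,0,0,q₄], 0) : PS) with hzsv
  show (!![D2 Hf zsv (eQ 0) (eQ 0), D2 Hf zsv (eQ 0) (eQ 3);
         D2 Hf zsv (eQ 3) (eQ 0), D2 Hf zsv (eQ 3) (eQ 3)]).PosDef
  have hCD : ContDiffAt ℝ 2 Hf zsv :=
    contDiffAt_Hred m m₁ μ₁ μ₂ (m/2) (2*m*m₁/(2*m+m₁)) q₁ q₄ hm hm₁ hμ hμ₂ hq₁ hq₄
  -- the four Hessian entries
  have hE00 : D2 Hf zsv (eQ 0) (eQ 0) = phiXX m m₁ μ₁ μ₂ q₁ q₄ := by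
    rw [D2_slice Hf zsv _ _ hCD]
    have houter : (fun s : ℝ => deriv (fun t : ℝ => Hf (zsv + s • eQ 0 + t • eQ 0)) 0)
        =ᶠ[nhds 0] fun s : ℝ => phiX m m₁ μ₁ μ₂ (q₁+s) q₄ := by
      filter_upwards [Ioo_mem_nhds (by linarith : -(q₁/4) < (0:ℝ)) (by linarith : (0:ℝ) < q₁/4)]
        with s hs
      have hx : 0 < q₁ + s := by have h1 := hs.1; linarith
      have hinner_ev : (fun t : ℝ => Hf (zsv + s • eQ 0 + t • eQ 0))
          =ᶠ[nhds 0] fun t : ℝ => phi m m₁ μ₁ μ₂ (q₁+s+t) q₄ := by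
        filter_upwards [Ioo_mem_nhds (by linarith : -(q₁/4) < (0:ℝ))
          (by linarith : (0:ℝ) < q₁/4)] with t ht
        rw [hHf, hzsv, pt_eq00]
        exact slice_val m m₁ μ₁ μ₂ hm hm₁ hμ.le hμ₂.le
          (by have h1 := hs.1; have h2 := ht.1; linarith) hq₄
      rw [hinner_ev.deriv_eq]
      exact (shift_deriv (d_phi_x m m₁ μ₁ μ₂ hm hx hq₄)).deriv
    rw [houter.deriv_eq]
    exact (shift_deriv (d_phiX_x m m₁ μ₁ μ₂ hm hq₁ hq₄)).deriv
  have hE03 : D2 Hf zsv (eQ 0) (eQ 3) = phiXY m m₁ q₁ q₄ := by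
    rw [D2_slice Hf zsv _ _ hCD]
    have houter : (fun s : ℝ => deriv (fun t : ℝ => Hf (zsv + s • eQ 0 + t • eQ 3)) 0)
        =ᶠ[nhds 0] fun s : ℝ => phiY m m₁ μ₁ μ₂ (q₁+s) q₄ := by
      filter_upwards [Ioo_mem_nhds (by linarith : -(q₁/4) < (0:ℝ)) (by linarith : (0:ℝ) < q₁/4)]
        with s hs
      have hx : 0 < q₁ + s := by have h1 := hs.1; linarith
      have hinner_ev : (fun t : ℝ => Hf (zsv + s • eQ 0 + t • eQ 3))
          =ᶠ[nhds 0] fun t : ℝ => phi m m₁ μ₁ μ₂ (q₁+s) (q₄+t) := by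
        filter_upwards [Ioo_mem_nhds (by linarith : -(q₄/4) < (0:ℝ))
          (by linarith : (0:ℝ) < q₄/4)] with t ht
        rw [hHf, hzsv, pt_eq]
        exact slice_val m m₁ μ₁ μ₂ hm hm₁ hμ.le hμ₂.le hx (by have h2 := ht.1; linarith)
      rw [hinner_ev.deriv_eq]
      exact (shift_deriv (d_phi_y m m₁ μ₁ μ₂ hm hm₁ hq₄ (x := q₁+s))).deriv
    rw [houter.deriv_eq]
    exact (shift_deriv (d_phiY_x m m₁ μ₁ μ₂ hm hm₁ hq₁ hq₄)).deriv
  have hE30 : D2 Hf zsv (eQ 3) (eQ 0) = phiXY m m₁ q₁ q₄ := by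
    rw [D2_slice Hf zsv _ _ hCD]
    have houter : (fun s : ℝ => deriv (fun t : ℝ => Hf (zsv + s • eQ 3 + t • eQ 0)) 0)
        =ᶠ[nhds 0] fun s : ℝ => phiX m m₁ μ₁ μ₂ q₁ (q₄+s) := by
      filter_upwards [Ioo_mem_nhds (by linarith : -(q₄/4) < (0:ℝ)) (by linarith : (0:ℝ) < q₄/4)]
        with s hs
      have hy : 0 < q₄ + s := by have h1 := hs.1; linarith
      have hinner_ev : (fun t : ℝ => Hf (zsv + s • eQ 3 + t • eQ 0))
          =ᶠ[nhds 0] fun t : ℝ => phi m m₁ μ₁ μ₂ (q₁+t) (q₄+s) := by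
        filter_upwards [Ioo_mem_nhds (by linarith : -(q₁/4) < (0:ℝ))
          (by linarith : (0:ℝ) < q₁/4)] with t ht
        rw [hHf, hzsv, pt_eq30]
        exact slice_val m m₁ μ₁ μ₂ hm hm₁ hμ.le hμ₂.le (by have h2 := ht.1; linarith) hy
      rw [hinner_ev.deriv_eq]
      exact (shift_deriv (d_phi_x m m₁ μ₁ μ₂ hm hq₁ hy)).deriv
    rw [houter.deriv_eq]
    exact (shift_deriv (d_phiX_y m m₁ μ₁ μ₂ hm hm₁ hq₁ hq₄)).deriv
  have hE33 : D2 Hf zsv (eQ 3) (eQ 3) = phiYY m m₁ μ₁ μ₂ q₁ q₄ := by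
    rw [D2_slice Hf zsv _ _ hCD]
    have houter : (fun s : ℝ => deriv (fun t : ℝ => Hf (zsv + s • eQ 3 + t • eQ 3)) 0)
        =ᶠ[nhds 0] fun s : ℝ => phiY m m₁ μ₁ μ₂ q₁ (q₄+s) := by
      filter_upwards [Ioo_mem_nhds (by linarith : -(q₄/4) < (0:ℝ)) (by linarith : (0:ℝ) < q₄/4)]
        with s hs
      have hy : 0 < q₄ + s := by have h1 := hs.1; linarith
      have hinner_ev : (fun t : ℝ => Hf (zsv + s • eQ 3 + t • eQ 3))
          =ᶠ[nhds 0] fun t : ℝ => phi m m₁ μ₁ μ₂ q₁ (q₄+s+t) := by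
        filter_upwards [Ioo_mem_nhds (by linarith : -(q₄/4) < (0:ℝ))
          (by linarith : (0:ℝ) < q₄/4)] with t ht
        rw [hHf, hzsv, pt_eq33]
        exact slice_val m m₁ μ₁ μ₂ hm hm₁ hμ.le hμ₂.le hq₁
          (by have h1 := hs.1; have h2 := ht.1; linarith)
      rw [hinner_ev.deriv_eq]
      exact (shift_deriv (d_phi_y m m₁ μ₁ μ₂ hm hm₁ hy (x := q₁))).deriv
    rw [houter.deriv_eq]
    exact (shift_deriv (d_phiY_y m m₁ μ₁ μ₂ hm hm₁ hq₁ hq₄)).deriv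
  rw [hE00, hE03, hE30, hE33]
  -- Now pure algebra with the equilibrium equations.
  have hW : (0:ℝ) < q₁^2/4 + q₄^2 := by positivity
  set sW : ℝ := Real.sqrt (q₁^2/4 + q₄^2) with hsWdef
  have hsW : 0 < sW := Real.sqrt_pos.mpr hW
  have hsW2 : sW^2 = q₁^2/4 + q₄^2 := Real.sq_sqrt hW.le
  have hrpow : (q₁^2 + 4*q₄^2) ^ ((3:ℝ)/2) = 8 * sW^3 := by
    have hpos : (0:ℝ) ≤ q₁^2 + 4*q₄^2 := by positivity
    rw [show ((3:ℝ)/2) = ((3:ℕ):ℝ) * ((1:ℝ)/2) by norm_num, Real.rpow_mul hpos,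
      Real.rpow_natCast, ← Real.sqrt_eq_rpow]
    rw [show (q₁^2 + 4*q₄^2)^(3:ℕ) = ((2*sW)^3)^2 by
      rw [← pow_mul, show 3*2 = 2*3 by ring, pow_mul, mul_pow, hsW2]; ring]
    rw [Real.sqrt_sq (by positivity)]
    ring
  rw [hrpow] at heq1 heq2
  have hμ₂2 : μ₂^2 = m^3*q₁/2 + m^2*m₁*q₁^4/(4*sW^3) := by
    have h := heq1
    field_simp at h
    have h4 : (4*μ₂^2*sW^3) * q₁^2 = (2*m^3*q₁*sW^3 + m^2*m₁*q₁^4) * q₁^2 := by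
      linear_combination (-q₁^2/4) * h
    have h5 := mul_right_cancel₀ (pow_ne_zero 2 hq₁.ne') h4
    field_simp
    linear_combination 2 * h5
  have hμ₁2 : μ₁^2 = 4*m^2*m₁^2*q₄^4/((2*m+m₁)*sW^3) := by
    have h := heq2
    have h2m : (0:ℝ) < 2*m+m₁ := by linarith
    field_simp at h
    have h4 : (μ₁^2*((2*m+m₁)*sW^3)) * q₄^3 = (4*m^2*m₁^2*q₄^4) * q₄^3 := by
      linear_combination (-(q₄^3)/8) * h
    have h5 := mul_right_cancel₀ (pow_ne_zero 3 hq₄.ne') h4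
    field_simp
    linear_combination h5
  have ha2 : phiXX m m₁ μ₁ μ₂ q₁ q₄ = m^2/q₁^3 + m*m₁*(2*sW^2 - 3*q₁^2/8)/sW^5 := by
    simp only [phiXX, ← hsWdef]
    rw [hμ₂2]
    field_simp
    ring
  have ha3 : phiXX m m₁ μ₁ μ₂ q₁ q₄ = m^2/q₁^3 + m*m₁*(q₁^2/8 + 2*q₄^2)/sW^5 := by
    rw [ha2, show 2*sW^2 - 3*q₁^2/8 = q₁^2/8 + 2*q₄^2 from by linear_combination 2*hsW2]
  have hc2 : phiYY m m₁ μ₁ μ₂ q₁ q₄ = m*m₁*(8*sW^2 - 6*q₄^2)/sW^5 := by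
    have h2m : (0:ℝ) < 2*m+m₁ := by linarith
    simp only [phiYY, ← hsWdef]
    rw [hμ₁2]
    field_simp
    ring
  have hc3 : phiYY m m₁ μ₁ μ₂ q₁ q₄ = m*m₁*(2*q₁^2 + 2*q₄^2)/sW^5 := by
    rw [hc2, show 8*sW^2 - 6*q₄^2 = 2*q₁^2 + 8*q₄^2 - 6*q₄^2 from by linear_combination 8*hsW2]
    ring_nf
  have hb : phiXY m m₁ q₁ q₄ = -(3*m*m₁*q₁*q₄/2)/sW^5 := by
    simp only [phiXY, ← hsWdef]
  have ha : 0 < phiXX m m₁ μ₁ μ₂ q₁ q₄ := by rw [ha3]; positivity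
  have hdet : 0 < phiXX m m₁ μ₁ μ₂ q₁ q₄ * phiYY m m₁ μ₁ μ₂ q₁ q₄
      - phiXY m m₁ q₁ q₄ ^ 2 := by
    have hdeteq : phiXX m m₁ μ₁ μ₂ q₁ q₄ * phiYY m m₁ μ₁ μ₂ q₁ q₄ - phiXY m m₁ q₁ q₄ ^ 2
        = (m^2/q₁^3) * (m*m₁*(2*q₁^2 + 2*q₄^2)/sW^5)
          + m^2*m₁^2*(q₁^2/2 + 2*q₄^2)^2/sW^10 := by
      rw [ha3, hc3, hb]
      field_simp
      ring
    rw [hdeteq]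
    positivity
  exact posdef_2x2 ha hdet

end
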